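/- For every z in the unit sphere S^{2m−1} ⊂ ℂ^m: ⟨[Y_l, Y_{l'}](z), X(z)⟩ = 0 for all 1 ≤ l, l' ≤ m−1; ⟨[W_p, W_{p'}](z), X(z)⟩ = 0 for all 1 ≤ p, p' ≤ m−1; and ⟨[Y_l, W_p](z), X(z)⟩ = 0 whenever 1 ≤ l < p ≤ m−1. -/

import Mathlib

open scoped BigOperators ComplexConjugate

/-- The real inner product on `ℂ^m`: `⟨v,w⟩ = Re ∑_k v_k · conj (w_k)`. -/
noncomputable def rinner {m : ℕ} (v w : Fin m → ℂ) : ℝ :=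
  (∑ k : Fin m, v k * conj (w k)).re

/-- The vector field `X(z) = (iθ₁z₁,…,iθ_m z_m)` generating the flow. -/
noncomputable def sphX {m : ℕ} (θ : Fin m → ℝ) (z : Fin m → ℂ) : Fin m → ℂ :=
  fun k => Complex.I * (θ k : ℂ) * z k

/-- The vector field `Y_l` (here `l` is a 0-based index; the paper's `Y_l` for
`1 ≤ l ≤ m−1` corresponds to indices `l` with `(l:ℕ)+1 < m`): its components are `0` below `l`,
`−(∑_{k>l}|z_k|²)·z_l` at `l`, and `|z_l|²·z_k` above `l`. -/
noncomputable def sphY {m : ℕ} (l : Fin m) (z : Fin m → ℂ) : Fin m → ℂ := fun k =>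
  if (k : ℕ) < (l : ℕ) then 0
  else if k = l then
    -(((∑ j ∈ Finset.univ.filter (fun j : Fin m => (l : ℕ) < (j : ℕ)), ‖z j‖ ^ 2 : ℝ) : ℂ)) * z l
  else ((‖z l‖ ^ 2 : ℝ) : ℂ) * z k

/-- The generic vector field `W_p` (0-based index `p`; the paper's `W_p` for `1 ≤ p ≤ m−2`
corresponds to indices `p` with `(p:ℕ)+2 < m`): components `0` below `p`,
`−(∑_{k>p}θ_k²|z_k|²)·i z_p` at `p`, and `θ_p θ_k |z_p|²·i z_k` above `p`. -/
noncomputable def sphW {m : ℕ} (θ : Fin m → ℝ) (p : Fin m) (z : Fin m → ℂ) : Fin m → ℂ := fun k =>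
  if (k : ℕ) < (p : ℕ) then 0
  else if k = p then
    -(((∑ j ∈ Finset.univ.filter (fun j : Fin m => (p : ℕ) < (j : ℕ)),
        (θ j) ^ 2 * ‖z j‖ ^ 2 : ℝ) : ℂ)) * (Complex.I * z p)
  else (((θ p) * (θ k) * ‖z p‖ ^ 2 : ℝ) : ℂ) * (Complex.I * z k)

/-- The special last vector field `W_{m−1}`, with `a` the index `m−2` and `b` the index `m−1`
(0-based): component `−θ_b|z_b|²·i z_a` at `a`, `θ_a|z_a|²·i z_b` at `b`, and `0` elsewhere. -/
noncomputable def sphWlast {m : ℕ} (θ : Fin m → ℝ) (a b : Fin m) (z : Fin m → ℂ) :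
    Fin m → ℂ := fun k =>
  if k = a then -(((θ b * ‖z b‖ ^ 2 : ℝ)) : ℂ) * (Complex.I * z a)
  else if k = b then (((θ a * ‖z a‖ ^ 2 : ℝ)) : ℂ) * (Complex.I * z b)
  else 0

/-- The full family `W_p`, `1 ≤ p ≤ m−1` (0-based: `(p:ℕ)+1 < m`): the generic `W_p` for
`p ≤ m−2` and the special `W_{m−1}` for the last index. -/
noncomputable def sphWfull {m : ℕ} (hm : 2 ≤ m) (θ : Fin m → ℝ) (p : Fin m) :
    (Fin m → ℂ) → (Fin m → ℂ) :=
  if (p : ℕ) = m - 2 then sphWlast θ ⟨m - 2, by omega⟩ ⟨m - 1, by omega⟩ else sphW θ p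

/-- The Lie bracket `[U,V](z) = (DV)_z(U(z)) − (DU)_z(V(z))` of vector fields on `ℂ^m`,
`D` being the Fréchet derivative over `ℝ`. -/
noncomputable def bracket {m : ℕ} (U V : (Fin m → ℂ) → (Fin m → ℂ)) (z : Fin m → ℂ) :
    Fin m → ℂ :=
  fderiv ℝ V z (U z) - fderiv ℝ U z (V z)

section Aux
open Complex ContinuousLinearMap
variable {m : ℕ}

noncomputable def nsqCLM (a : ℂ) : ℂ →L[ℝ] ℝ :=
  (2 * a.re) • Complex.reCLM + (2 * a.im) • Complex.imCLM

lemma nsqCLM_apply (a h : ℂ) : nsqCLM a h = 2 * a.re * h.re + 2 * a.im * h.im := by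
  simp [nsqCLM]

lemma hasFDerivAt_nsq (a : ℂ) : HasFDerivAt (fun w : ℂ => ‖w‖ ^ 2) (nsqCLM a) a := by
  have h : (fun w : ℂ => ‖w‖ ^ 2) = fun w : ℂ => w.re * w.re + w.im * w.im := by
    funext w
    rw [← Complex.normSq_apply, ← Complex.sq_norm]
  rw [h]
  have h1 := (Complex.reCLM.hasFDerivAt (x := a)).fun_mul (Complex.reCLM.hasFDerivAt (x := a))
  have h2 := (Complex.imCLM.hasFDerivAt (x := a)).fun_mul (Complex.imCLM.hasFDerivAt (x := a))
  refine HasFDerivAt.congr_fderiv (h1.add h2) ?_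
  ext w
  simp [nsqCLM]
  ring

variable {m : ℕ}

noncomputable def scalCLM (w : Fin m → ℝ) (s : Finset (Fin m)) (z : Fin m → ℂ) :
    (Fin m → ℂ) →L[ℝ] ℝ :=
  ∑ j ∈ s, w j • ((nsqCLM (z j)).comp (ContinuousLinearMap.proj j))

lemma hasFDerivAt_scal (w : Fin m → ℝ) (s : Finset (Fin m)) (z : Fin m → ℂ) :
    HasFDerivAt (fun z : Fin m → ℂ => ∑ j ∈ s, w j * ‖z j‖ ^ 2) (scalCLM w s z) z := by
  refine HasFDerivAt.fun_sum fun j hj => ?_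
  have h1 : HasFDerivAt (fun z : Fin m → ℂ => ‖z j‖ ^ 2)
      ((nsqCLM (z j)).comp (ContinuousLinearMap.proj j)) z :=
    by have := (hasFDerivAt_nsq (z j)).comp z (hasFDerivAt_apply (𝕜 := ℝ) j z); exact this
  exact h1.const_mul (w j)

noncomputable def diagField (μ : Fin m → ℂ) (w : Fin m → Fin m → ℝ)
    (s : Fin m → Finset (Fin m)) (z : Fin m → ℂ) : Fin m → ℂ :=
  fun k => ((∑ j ∈ s k, w k j * ‖z j‖ ^ 2 : ℝ) : ℂ) * (μ k * z k)

noncomputable def diagD (μ : Fin m → ℂ) (w : Fin m → Fin m → ℝ)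
    (s : Fin m → Finset (Fin m)) (z : Fin m → ℂ) : (Fin m → ℂ) →L[ℝ] (Fin m → ℂ) :=
  ContinuousLinearMap.pi fun k =>
    ((∑ j ∈ s k, w k j * ‖z j‖ ^ 2 : ℝ) : ℂ) • (μ k • ContinuousLinearMap.proj k)
    + (Complex.ofRealCLM.comp (scalCLM (w k) (s k) z)).smulRight (μ k * z k)

lemma hasFDerivAt_diagField (μ : Fin m → ℂ) (w : Fin m → Fin m → ℝ)
    (s : Fin m → Finset (Fin m)) (z : Fin m → ℂ) :
    HasFDerivAt (diagField μ w s) (diagD μ w s z) z := by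
  rw [hasFDerivAt_pi']
  intro k
  have hc : HasFDerivAt (fun z : Fin m → ℂ => ((∑ j ∈ s k, w k j * ‖z j‖ ^ 2 : ℝ) : ℂ))
      (Complex.ofRealCLM.comp (scalCLM (w k) (s k) z)) z := by
    exact Complex.ofRealCLM.hasFDerivAt.comp z (hasFDerivAt_scal (w k) (s k) z)
  have hd : HasFDerivAt (fun z : Fin m → ℂ => μ k * z k)
      (μ k • ContinuousLinearMap.proj k) z :=
    HasFDerivAt.const_mul (hasFDerivAt_apply (𝕜 := ℝ) k z) (μ k)
  have h := hc.mul' hd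
  have hp : (ContinuousLinearMap.proj k).comp (diagD μ w s z)
      = ((∑ j ∈ s k, w k j * ‖z j‖ ^ 2 : ℝ) : ℂ) • (μ k • ContinuousLinearMap.proj k)
        + (Complex.ofRealCLM.comp (scalCLM (w k) (s k) z)).smulRight (μ k * z k) := by
    ext v; simp [diagD]
  rw [hp]
  exact h

lemma scal_diag (w0 : Fin m → ℝ) (s0 : Finset (Fin m)) (μ : Fin m → ℂ)
    (w : Fin m → Fin m → ℝ) (s : Fin m → Finset (Fin m)) (z : Fin m → ℂ) :
    scalCLM w0 s0 z (diagField μ w s z) =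
      ∑ j ∈ s0, w0 j * (2 * (∑ i ∈ s j, w j i * ‖z i‖ ^ 2) * (μ j).re
        * ((z j).re ^ 2 + (z j).im ^ 2)) := by
  simp only [scalCLM, ContinuousLinearMap.sum_apply, ContinuousLinearMap.smul_apply,
    ContinuousLinearMap.comp_apply, ContinuousLinearMap.proj_apply, smul_eq_mul]
  refine Finset.sum_congr rfl fun j _ => ?_
  have hd : diagField μ w s z j = ((∑ i ∈ s j, w j i * ‖z i‖ ^ 2 : ℝ) : ℂ) * (μ j * z j) := rfl
  rw [nsqCLM_apply, hd]
  set c : ℝ := ∑ i ∈ s j, w j i * ‖z i‖ ^ 2 with hc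
  simp only [Complex.mul_re, Complex.mul_im, Complex.ofReal_re, Complex.ofReal_im]
  ring

lemma bracket_diag (μ μ' : Fin m → ℂ) (w w' : Fin m → Fin m → ℝ)
    (s s' : Fin m → Finset (Fin m)) (z : Fin m → ℂ) (k : Fin m) :
    bracket (diagField μ w s) (diagField μ' w' s') z k =
      ((∑ j ∈ s' k, w' k j * (2 * (∑ i ∈ s j, w j i * ‖z i‖ ^ 2) * (μ j).re
        * ((z j).re ^ 2 + (z j).im ^ 2)) : ℝ) : ℂ) * (μ' k * z k)
    - ((∑ j ∈ s k, w k j * (2 * (∑ i ∈ s' j, w' j i * ‖z i‖ ^ 2) * (μ' j).re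
        * ((z j).re ^ 2 + (z j).im ^ 2)) : ℝ) : ℂ) * (μ k * z k) := by
  have hU := (hasFDerivAt_diagField μ w s z).fderiv
  have hV := (hasFDerivAt_diagField μ' w' s' z).fderiv
  simp only [bracket, hU, hV, Pi.sub_apply]
  rw [show (diagD μ' w' s' z) (diagField μ w s z) k
      = ((∑ j ∈ s' k, w' k j * ‖z j‖ ^ 2 : ℝ) : ℂ) * (μ' k * (diagField μ w s z k))
        + ((scalCLM (w' k) (s' k) z (diagField μ w s z) : ℝ) : ℂ) * (μ' k * z k) by
    simp [diagD, smul_eq_mul]]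
  rw [show (diagD μ w s z) (diagField μ' w' s' z) k
      = ((∑ j ∈ s k, w k j * ‖z j‖ ^ 2 : ℝ) : ℂ) * (μ k * (diagField μ' w' s' z k))
        + ((scalCLM (w k) (s k) z (diagField μ' w' s' z) : ℝ) : ℂ) * (μ k * z k) by
    simp [diagD, smul_eq_mul]]
  rw [scal_diag, scal_diag]
  simp only [diagField]
  ring

-- helper re-lemmas
lemma re_term_one (A B t : ℝ) (u : ℂ) :
    ((((A : ℝ) : ℂ) * ((1:ℂ) * u) - ((B : ℝ) : ℂ) * ((1:ℂ) * u))
      * (starRingEnd ℂ) (Complex.I * (t : ℂ) * u)).re = 0 := by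
  simp only [one_mul, Complex.mul_re, Complex.mul_im, Complex.sub_re, Complex.sub_im,
    Complex.conj_re, Complex.conj_im, Complex.I_re, Complex.I_im, Complex.ofReal_re,
    Complex.ofReal_im]
  ring

lemma re_term_I (A t : ℝ) (u : ℂ) :
    ((((A : ℝ) : ℂ) * (Complex.I * u))
      * (starRingEnd ℂ) (Complex.I * (t : ℂ) * u)).re
      = A * t * ((u.re) ^ 2 + (u.im) ^ 2) := by
  simp only [Complex.mul_re, Complex.mul_im, Complex.conj_re, Complex.conj_im, Complex.I_re,
    Complex.I_im, Complex.ofReal_re, Complex.ofReal_im]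
  ring

lemma rinner_eq (v u : Fin m → ℂ) :
    rinner v u = ∑ k : Fin m, (v k * (starRingEnd ℂ) (u k)).re := by
  simp [rinner, Complex.re_sum]

-- the data for sphY
def wY (l : Fin m) : Fin m → Fin m → ℝ := fun k _ => if k = l then -1 else 1

def sY (l : Fin m) : Fin m → Finset (Fin m) := fun k =>
  if (k : ℕ) < (l : ℕ) then ∅
  else if k = l then Finset.univ.filter (fun j : Fin m => (l : ℕ) < (j : ℕ)) else {l}

lemma sphY_eq (l : Fin m) : sphY l = diagField (fun _ => 1) (wY l) (sY l) := by
  funext z k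
  simp only [sphY, diagField, wY, sY]
  by_cases h1 : (k : ℕ) < (l : ℕ)
  · have h2 : k ≠ l := fun h => by subst h; omega
    simp [h1, h2]
  · by_cases h2 : k = l
    · subst h2
      simp [h1, neg_mul]
    · simp [h1, h2]

-- the data for sphW
def wW (θ : Fin m → ℝ) (p : Fin m) : Fin m → Fin m → ℝ := fun k j =>
  if k = p then -(θ j ^ 2) else θ p * θ k

def sW (p : Fin m) : Fin m → Finset (Fin m) := fun k =>
  if (k : ℕ) < (p : ℕ) then ∅
  else if k = p then Finset.univ.filter (fun j : Fin m => (p : ℕ) < (j : ℕ)) else {p}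

lemma sphW_eq (θ : Fin m → ℝ) (p : Fin m) :
    sphW θ p = diagField (fun _ => Complex.I) (wW θ p) (sW p) := by
  funext z k
  simp only [sphW, diagField, wW, sW]
  by_cases h1 : (k : ℕ) < (p : ℕ)
  · have h2 : k ≠ p := fun h => by subst h; omega
    simp [h1, h2]
  · by_cases h2 : k = p
    · subst h2
      simp [h1, neg_mul]
    · simp [h1, h2]

-- the data for sphWlast
def wL (θ : Fin m → ℝ) (a b : Fin m) : Fin m → Fin m → ℝ := fun k _ =>
  if k = a then -(θ b) else θ a

def sL (a b : Fin m) : Fin m → Finset (Fin m) := fun k =>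
  if k = a then {b} else if k = b then {a} else ∅

lemma sphWlast_eq (θ : Fin m → ℝ) (a b : Fin m) :
    sphWlast θ a b = diagField (fun _ => Complex.I) (wL θ a b) (sL a b) := by
  funext z k
  simp only [sphWlast, diagField, wL, sL]
  by_cases h1 : k = a
  · subst h1
    simp [neg_mul]
  · by_cases h2 : k = b
    · subst h2
      simp [h1]
    · simp [h1, h2]

lemma YY_zero (w w' : Fin m → Fin m → ℝ) (s s' : Fin m → Finset (Fin m))
    (θ : Fin m → ℝ) (z : Fin m → ℂ) :
    rinner (bracket (diagField (fun _ => 1) w s) (diagField (fun _ => 1) w' s') z)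
      (sphX θ z) = 0 := by
  rw [rinner_eq]
  refine Finset.sum_eq_zero fun k _ => ?_
  rw [bracket_diag]
  exact re_term_one _ _ _ _

lemma II_zero (w w' : Fin m → Fin m → ℝ) (s s' : Fin m → Finset (Fin m))
    (θ : Fin m → ℝ) (z : Fin m → ℂ) :
    rinner (bracket (diagField (fun _ => Complex.I) w s)
      (diagField (fun _ => Complex.I) w' s') z) (sphX θ z) = 0 := by
  rw [rinner_eq]
  refine Finset.sum_eq_zero fun k _ => ?_
  rw [bracket_diag]
  simp [Complex.I_re]

lemma cY_eval (l j : Fin m) (z : Fin m → ℂ) (hlj : (l : ℕ) < (j : ℕ)) :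
    (∑ i ∈ sY l j, wY l j i * ‖z i‖ ^ 2) = ‖z l‖ ^ 2 := by
  have h1 : ¬ (j : ℕ) < (l : ℕ) := by omega
  have h2 : j ≠ l := fun h => by subst h; omega
  simp [sY, wY, h1, h2]

lemma YW_term (w' : Fin m → Fin m → ℝ) (s' : Fin m → Finset (Fin m)) (l : Fin m)
    (θ : Fin m → ℝ) (z : Fin m → ℂ) (k : Fin m) :
    (bracket (diagField (fun _ => 1) (wY l) (sY l)) (diagField (fun _ => Complex.I) w' s') z k
      * (starRingEnd ℂ) (sphX θ z k)).re
    = (∑ j ∈ s' k, w' k j * (2 * (∑ i ∈ sY l j, wY l j i * ‖z i‖ ^ 2)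
        * ((z j).re ^ 2 + (z j).im ^ 2)))
      * θ k * ((z k).re ^ 2 + (z k).im ^ 2) := by
  rw [bracket_diag]
  simp only [Complex.I_re, Complex.one_re, mul_zero, zero_mul, mul_one,
    Finset.sum_const_zero, Complex.ofReal_zero, sub_zero]
  exact re_term_I _ _ _

lemma YW_generic (l p : Fin m) (θ : Fin m → ℝ) (z : Fin m → ℂ) (hlp : (l : ℕ) < (p : ℕ)) :
    rinner (bracket (diagField (fun _ => 1) (wY l) (sY l))
      (diagField (fun _ => Complex.I) (wW θ p) (sW p)) z) (sphX θ z) = 0 := by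
  rw [rinner_eq]
  rw [Finset.sum_congr rfl (fun k _ => YW_term (wW θ p) (sW p) l θ z k)]
  set q : Fin m → ℝ := fun j => (z j).re ^ 2 + (z j).im ^ 2 with hq
  set S : ℝ := ∑ j ∈ Finset.univ.filter (fun j : Fin m => (p : ℕ) < (j : ℕ)),
      θ j ^ 2 * q j with hS
  rw [← Finset.sum_filter_add_sum_filter_not Finset.univ (fun k : Fin m => (p : ℕ) < (k : ℕ))]
  have h1 : ∑ k ∈ Finset.univ.filter (fun k : Fin m => (p : ℕ) < (k : ℕ)),
      (∑ j ∈ sW p k, wW θ p k j * (2 * (∑ i ∈ sY l j, wY l j i * ‖z i‖ ^ 2) * q j))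
        * θ k * q k
      = (2 * θ p * ‖z l‖ ^ 2 * q p) * S := by
    rw [hS, Finset.mul_sum]
    refine Finset.sum_congr rfl fun k hk => ?_
    have hpk : (p : ℕ) < (k : ℕ) := (Finset.mem_filter.mp hk).2
    have h1 : ¬ (k : ℕ) < (p : ℕ) := by omega
    have h2 : k ≠ p := fun h => by subst h; omega
    rw [show sW p k = {p} by simp [sW, h1, h2]]
    rw [Finset.sum_singleton, cY_eval l p z hlp]
    simp only [wW, if_neg h2]
    ring
  have h2 : ∑ k ∈ Finset.univ.filter (fun k : Fin m => ¬ (p : ℕ) < (k : ℕ)),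
      (∑ j ∈ sW p k, wW θ p k j * (2 * (∑ i ∈ sY l j, wY l j i * ‖z i‖ ^ 2) * q j))
        * θ k * q k
      = (-2 * ‖z l‖ ^ 2 * S) * θ p * q p := by
    rw [Finset.sum_eq_single_of_mem p (by simp)]
    · have h1 : ¬ (p : ℕ) < (p : ℕ) := lt_irrefl _
      rw [show sW p p = Finset.univ.filter (fun j : Fin m => (p : ℕ) < (j : ℕ)) by
        simp [sW]]
      have : (∑ j ∈ Finset.univ.filter (fun j : Fin m => (p : ℕ) < (j : ℕ)),
          wW θ p p j * (2 * (∑ i ∈ sY l j, wY l j i * ‖z i‖ ^ 2) * q j))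
          = -2 * ‖z l‖ ^ 2 * S := by
        rw [hS, Finset.mul_sum]
        refine Finset.sum_congr rfl fun j hj => ?_
        have hpj : (p : ℕ) < (j : ℕ) := (Finset.mem_filter.mp hj).2
        rw [cY_eval l j z (by omega)]
        simp only [wW, eq_self_iff_true, if_true]
        ring
      rw [this]
    · intro b hb hbp
      have hb1 : ¬ (p : ℕ) < (b : ℕ) := by simpa using (Finset.mem_filter.mp hb).2
      have hb2 : (b : ℕ) < (p : ℕ) := by
        rcases lt_or_eq_of_le (le_of_not_gt hb1) with h | h
        · exact h
        · exact absurd (Fin.ext h) hbp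
      rw [show sW p b = ∅ by simp [sW, hb2]]
      simp
  rw [h1, h2]
  ring

lemma YW_last (l a b : Fin m) (θ : Fin m → ℝ) (z : Fin m → ℂ)
    (hla : (l : ℕ) < (a : ℕ)) (hab : (a : ℕ) < (b : ℕ)) :
    rinner (bracket (diagField (fun _ => 1) (wY l) (sY l))
      (diagField (fun _ => Complex.I) (wL θ a b) (sL a b)) z) (sphX θ z) = 0 := by
  rw [rinner_eq]
  rw [Finset.sum_congr rfl (fun k _ => YW_term (wL θ a b) (sL a b) l θ z k)]
  have hne : a ≠ b := fun h => by subst h; omega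
  rw [← Finset.sum_subset (Finset.subset_univ ({a, b} : Finset (Fin m)))
      (fun k _ hk => ?_)]
  · rw [Finset.sum_pair hne]
    rw [show sL a b a = {b} by simp [sL], show sL a b b = {a} by simp [sL, hne.symm]]
    rw [Finset.sum_singleton, Finset.sum_singleton]
    rw [cY_eval l a z hla, cY_eval l b z (by omega)]
    simp only [wL, eq_self_iff_true, if_true, if_neg hne.symm]
    ring
  · have h1 : k ≠ a := fun h => by subst h; simp at hk
    have h2 : k ≠ b := by intro h; subst h; simp at hk
    rw [show sL a b k = ∅ by simp [sL, h1, h2]]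
    simp

end Aux

/-- The remaining brackets are orthogonal to `X` on the unit sphere:
`⟨[Y_l,Y_{l'}](z),X(z)⟩ = 0`, `⟨[W_p,W_{p'}](z),X(z)⟩ = 0`, and `⟨[Y_l,W_p](z),X(z)⟩ = 0`
whenever `l < p` (0-based indices, ranges as in the paper, `W` including the special last one). -/
theorem stmt16 {m : ℕ} (hm : 2 ≤ m) (θ : Fin m → ℝ) (hθ1 : θ ⟨0, by omega⟩ = 1)
    (hmono : Monotone θ) (z : Fin m → ℂ) (hz : ∑ k : Fin m, ‖z k‖ ^ 2 = 1) :
    (∀ l l' : Fin m, (l : ℕ) + 1 < m → (l' : ℕ) + 1 < m →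
      rinner (bracket (sphY l) (sphY l') z) (sphX θ z) = 0)
    ∧ (∀ p p' : Fin m, (p : ℕ) + 1 < m → (p' : ℕ) + 1 < m →
      rinner (bracket (sphWfull hm θ p) (sphWfull hm θ p') z) (sphX θ z) = 0)
    ∧ (∀ l p : Fin m, l < p → (p : ℕ) + 1 < m →
      rinner (bracket (sphY l) (sphWfull hm θ p) z) (sphX θ z) = 0) := by
  refine ⟨?_, ?_, ?_⟩
  · intro l l' _ _
    rw [sphY_eq, sphY_eq]
    exact YY_zero _ _ _ _ _ _
  · intro p p' _ _
    have h : ∀ p0 : Fin m, ∃ w s, sphWfull hm θ p0 = diagField (fun _ => Complex.I) w s := by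
      intro p0
      unfold sphWfull
      split
      · exact ⟨_, _, sphWlast_eq θ _ _⟩
      · exact ⟨_, _, sphW_eq θ p0⟩
    obtain ⟨w, s, hw⟩ := h p
    obtain ⟨w', s', hw'⟩ := h p'
    rw [hw, hw']
    exact II_zero _ _ _ _ _ _
  · intro l p hlp hp1
    have hl : (l : ℕ) < (p : ℕ) := hlp
    rw [sphY_eq]
    unfold sphWfull
    by_cases hp2 : (p : ℕ) = m - 2
    · rw [if_pos hp2, sphWlast_eq]
      exact YW_last l _ _ θ z (show (l : ℕ) < m - 2 by omega)
        (show m - 2 < m - 1 by omega)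
    · rw [if_neg hp2, sphW_eq]
      exact YW_generic l p θ z hl
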